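/- The vectors dω³ and dω̄³ (as above) span a space of complex dimension at most 1 if and only if ρ = 0, |B|² = |C|², AD̄ = ĀD, AB̄ = ĀC, and DB̄ = D̄C. -/

import Mathlib

open ExteriorAlgebra

section Aux

variable {V : Type*} [AddCommGroup V] [Module ℂ V]

/-- The wedge of two linear functionals, as an alternating 2-form. -/
noncomputable def wedgeForm (φ ψ : V →ₗ[ℂ] ℂ) : V [⋀^Fin 2]→ₗ[ℂ] ℂ where
  toFun v := φ (v 0) * ψ (v 1) - φ (v 1) * ψ (v 0)
  map_update_add' m i x y := by
    fin_cases i <;> simp [Function.update_apply] <;> ring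
  map_update_smul' m i c x := by
    fin_cases i <;> simp [Function.update_apply] <;> ring
  map_eq_zero_of_eq' v i j hv hij := by
    fin_cases i <;> fin_cases j <;> simp_all

/-- The linear functional on the exterior algebra extracting the coefficient along a
wedge of two functionals. -/
noncomputable def coeffFun (φ ψ : V →ₗ[ℂ] ℂ) : ExteriorAlgebra ℂ V →ₗ[ℂ] ℂ :=
  liftAlternating (Function.update (fun n => (0 : V [⋀^Fin n]→ₗ[ℂ] ℂ)) 2 (wedgeForm φ ψ))

lemma coeffFun_ι_mul_ι (φ ψ : V →ₗ[ℂ] ℂ) (x y : V) :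
    coeffFun φ ψ (ι ℂ x * ι ℂ y) = φ x * ψ y - φ y * ψ x := by
  rw [coeffFun, liftAlternating_ι_mul, liftAlternating_ι]
  show ((Function.update (fun n => (0 : V [⋀^Fin n]→ₗ[ℂ] ℂ)) 2
      (wedgeForm φ ψ)) 2).curryLeft x ![y] = _
  rw [Function.update_self]
  simp [wedgeForm]

lemma exists_dual_family {K M : Type*} {ι : Type*} [Field K] [AddCommGroup M] [Module K M]
    [DecidableEq ι] {v : ι → M} (hv : LinearIndependent K v) :
    ∃ φ : ι → M →ₗ[K] K, ∀ i j, φ i (v j) = if i = j then 1 else 0 := by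
  obtain ⟨q, hq⟩ := Submodule.exists_isCompl (Submodule.span K (Set.range v))
  let π := (Submodule.span K (Set.range v)).projectionOnto q hq
  let b : Module.Basis ι K (Submodule.span K (Set.range v)) := Module.Basis.span hv
  refine ⟨fun i => (b.coord i).comp π, fun i j => ?_⟩
  have hmem : v j ∈ Submodule.span K (Set.range v) := Submodule.subset_span ⟨j, rfl⟩
  have hπ : π (v j) = b j := by
    have h1 := Submodule.linearProjOfIsCompl_apply_left hq ⟨v j, hmem⟩
    have h2 : (b j : M) = v j := congrArg Subtype.val (Module.Basis.span_apply hv j)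
    apply Subtype.ext
    rw [show π (v j) = π ((⟨v j, hmem⟩ : Submodule.span K (Set.range v)) : M) from rfl, h1, h2]
  simp [hπ, Module.Basis.coord_apply, Module.Basis.repr_self, Finsupp.single_apply, eq_comm]

lemma finrank_span_pair_le_one_iff {K M : Type*} [Field K] [AddCommGroup M] [Module K M]
    (x y : M) :
    Module.finrank K ↥(Submodule.span K {x, y}) ≤ 1 ↔
      ∃ a b : K, (a ≠ 0 ∨ b ≠ 0) ∧ a • x + b • y = 0 := by
  have hrange : Set.range ![x, y] = {x, y} := by
    ext z
    simp [Fin.exists_fin_two]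
    tauto
  constructor
  · intro h
    by_contra hc
    push_neg at hc
    have hli : LinearIndependent K ![x, y] := by
      rw [LinearIndependent.pair_iff]
      intro s t hst
      by_contra h'
      rw [not_and_or] at h'
      exact hc s t (by tauto) hst
    have := finrank_span_eq_card hli
    rw [hrange] at this
    simp [this] at h
  · rintro ⟨a, b, hab, heq⟩
    have key : ∃ z : M, Submodule.span K {x, y} ≤ K ∙ z := by
      rcases hab with ha | hb
      · refine ⟨y, ?_⟩
        rw [Submodule.span_le]
        rintro w (rfl | rfl)
        · have : w = (-(a⁻¹ * b)) • y := by
            have : a • w = -(b • y) := by linear_combination (norm := module) heq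
            calc w = a⁻¹ • (a • w) := by rw [smul_smul, inv_mul_cancel₀ ha, one_smul]
            _ = (-(a⁻¹ * b)) • y := by rw [this, smul_neg, smul_smul]; module
          rw [SetLike.mem_coe, Submodule.mem_span_singleton]
          exact ⟨-(a⁻¹ * b), this.symm⟩
        · exact Submodule.mem_span_singleton_self _
      · refine ⟨x, ?_⟩
        rw [Submodule.span_le]
        rintro w (rfl | rfl)
        · exact Submodule.mem_span_singleton_self _
        · have : w = (-(b⁻¹ * a)) • x := by
            have : b • w = -(a • x) := by linear_combination (norm := module) heq
            calc w = b⁻¹ • (b • w) := by rw [smul_smul, inv_mul_cancel₀ hb, one_smul]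
            _ = (-(b⁻¹ * a)) • x := by rw [this, smul_neg, smul_smul]; module
          rw [SetLike.mem_coe, Submodule.mem_span_singleton]
          exact ⟨-(b⁻¹ * a), this.symm⟩
    obtain ⟨z, hz⟩ := key
    have hz1 : Module.finrank K ↥(K ∙ z) ≤ 1 := by
      rcases eq_or_ne z 0 with rfl | hz0
      · rw [Submodule.span_zero_singleton]
        simp [finrank_bot]
      · rw [finrank_span_singleton hz0]
    calc Module.finrank K ↥(Submodule.span K {x, y}) ≤ Module.finrank K ↥(K ∙ z) :=
          Submodule.finrank_mono hz
      _ ≤ 1 := hz1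

lemma ι_mul_swap (x y : V) : ι ℂ y * ι ℂ x = -(ι ℂ x * ι ℂ y) := by
  have := ι_add_mul_swap (R := ℂ) x y
  linear_combination (norm := abel) this

end Aux

/-- The 2-form `dω³` determined by the structure equations. -/
noncomputable def dOmega3 {V : Type*} [AddCommGroup V] [Module ℂ V]
    (ω1 ω2 bω1 bω2 : V) (ρ A B C D : ℂ) : ExteriorAlgebra ℂ V :=
  ρ • (ι ℂ ω1 * ι ℂ ω2) + A • (ι ℂ ω1 * ι ℂ bω1) + B • (ι ℂ ω1 * ι ℂ bω2) +
    C • (ι ℂ ω2 * ι ℂ bω1) + D • (ι ℂ ω2 * ι ℂ bω2)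

/-- The conjugate 2-form `dω̄³`. -/
noncomputable def dOmegaBar3 {V : Type*} [AddCommGroup V] [Module ℂ V]
    (ω1 ω2 bω1 bω2 : V) (ρ A B C D : ℂ) : ExteriorAlgebra ℂ V :=
  (starRingEnd ℂ) ρ • (ι ℂ bω1 * ι ℂ bω2) + (starRingEnd ℂ) A • (ι ℂ bω1 * ι ℂ ω1) +
    (starRingEnd ℂ) B • (ι ℂ bω1 * ι ℂ ω2) + (starRingEnd ℂ) C • (ι ℂ bω2 * ι ℂ ω1) +
    (starRingEnd ℂ) D • (ι ℂ bω2 * ι ℂ ω2)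

lemma combo_eq_zero {V : Type*} [AddCommGroup V] [Module ℂ V]
    (ω1 ω2 bω1 bω2 : V) (ρ A B C D a b : ℂ)
    (h0 : a * ρ = 0) (h5 : b * (starRingEnd ℂ) ρ = 0)
    (h1 : a * A = b * (starRingEnd ℂ) A) (h2 : a * B = b * (starRingEnd ℂ) C)
    (h3 : a * C = b * (starRingEnd ℂ) B) (h4 : a * D = b * (starRingEnd ℂ) D) :
    a • dOmega3 ω1 ω2 bω1 bω2 ρ A B C D + b • dOmegaBar3 ω1 ω2 bω1 bω2 ρ A B C D = 0 := by
  rw [dOmega3, dOmegaBar3, ι_mul_swap (y := bω1) (x := ω1), ι_mul_swap (y := bω1) (x := ω2),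
    ι_mul_swap (y := bω2) (x := ω1), ι_mul_swap (y := bω2) (x := ω2)]
  match_scalars
  · linear_combination h0
  · linear_combination h1
  · linear_combination h2
  · linear_combination h3
  · linear_combination h4
  · linear_combination h5

/-- `dω³` and `dω̄³` span a space of complex dimension at most `1` if and only if
`ρ = 0`, `|B|² = |C|²`, `AD̄ = ĀD`, `AB̄ = ĀC` and `DB̄ = D̄C`. -/
theorem span_dOmega3_dim_le_one_iff {V : Type*} [AddCommGroup V] [Module ℂ V]
    (ω1 ω2 bω1 bω2 : V) (hli : LinearIndependent ℂ ![ω1, ω2, bω1, bω2])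
    (ρ A B C D : ℂ) :
    Module.finrank ℂ ↥(Submodule.span ℂ
        {dOmega3 ω1 ω2 bω1 bω2 ρ A B C D, dOmegaBar3 ω1 ω2 bω1 bω2 ρ A B C D}) ≤ 1 ↔
      (ρ = 0 ∧ Complex.normSq B = Complex.normSq C ∧
        A * (starRingEnd ℂ) D = (starRingEnd ℂ) A * D ∧
        A * (starRingEnd ℂ) B = (starRingEnd ℂ) A * C ∧
        D * (starRingEnd ℂ) B = (starRingEnd ℂ) D * C) := by
  rw [finrank_span_pair_le_one_iff]
  obtain ⟨φ, hφ⟩ := exists_dual_family hli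
  have p00 : φ 0 ω1 = 1 := by simpa using hφ 0 0
  have p01 : φ 0 ω2 = 0 := by simpa using hφ 0 1
  have p02 : φ 0 bω1 = 0 := by simpa using hφ 0 2
  have p03 : φ 0 bω2 = 0 := by simpa using hφ 0 3
  have p10 : φ 1 ω1 = 0 := by simpa using hφ 1 0
  have p11 : φ 1 ω2 = 1 := by simpa using hφ 1 1
  have p12 : φ 1 bω1 = 0 := by simpa using hφ 1 2
  have p13 : φ 1 bω2 = 0 := by simpa using hφ 1 3
  have p20 : φ 2 ω1 = 0 := by simpa using hφ 2 0
  have p21 : φ 2 ω2 = 0 := by simpa using hφ 2 1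
  have p22 : φ 2 bω1 = 1 := by simpa using hφ 2 2
  have p23 : φ 2 bω2 = 0 := by simpa using hφ 2 3
  have p30 : φ 3 ω1 = 0 := by simpa using hφ 3 0
  have p31 : φ 3 ω2 = 0 := by simpa using hφ 3 1
  have p32 : φ 3 bω1 = 0 := by simpa using hφ 3 2
  have p33 : φ 3 bω2 = 1 := by simpa using hφ 3 3
  constructor
  · rintro ⟨a, b, hab, heq⟩
    have mkE : ∀ (i j : Fin 4),
        coeffFun (φ i) (φ j) (a • dOmega3 ω1 ω2 bω1 bω2 ρ A B C D +
          b • dOmegaBar3 ω1 ω2 bω1 bω2 ρ A B C D) = 0 := by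
      intro i j; rw [heq, map_zero]
    have E01 : a * ρ = 0 := by
      have h := mkE 0 1
      simp only [dOmega3, dOmegaBar3, map_add, map_smul, coeffFun_ι_mul_ι, smul_eq_mul,
        p00, p01, p02, p03, p10, p11, p12, p13, p20, p21, p22, p23, p30, p31, p32, p33] at h
      linear_combination h
    have E23 : b * (starRingEnd ℂ) ρ = 0 := by
      have h := mkE 2 3
      simp only [dOmega3, dOmegaBar3, map_add, map_smul, coeffFun_ι_mul_ι, smul_eq_mul,
        p00, p01, p02, p03, p10, p11, p12, p13, p20, p21, p22, p23, p30, p31, p32, p33] at h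
      linear_combination h
    have E02 : a * A = b * (starRingEnd ℂ) A := by
      have h := mkE 0 2
      simp only [dOmega3, dOmegaBar3, map_add, map_smul, coeffFun_ι_mul_ι, smul_eq_mul,
        p00, p01, p02, p03, p10, p11, p12, p13, p20, p21, p22, p23, p30, p31, p32, p33] at h
      linear_combination h
    have E03 : a * B = b * (starRingEnd ℂ) C := by
      have h := mkE 0 3
      simp only [dOmega3, dOmegaBar3, map_add, map_smul, coeffFun_ι_mul_ι, smul_eq_mul,
        p00, p01, p02, p03, p10, p11, p12, p13, p20, p21, p22, p23, p30, p31, p32, p33] at h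
      linear_combination h
    have E12 : a * C = b * (starRingEnd ℂ) B := by
      have h := mkE 1 2
      simp only [dOmega3, dOmegaBar3, map_add, map_smul, coeffFun_ι_mul_ι, smul_eq_mul,
        p00, p01, p02, p03, p10, p11, p12, p13, p20, p21, p22, p23, p30, p31, p32, p33] at h
      linear_combination h
    have E13 : a * D = b * (starRingEnd ℂ) D := by
      have h := mkE 1 3
      simp only [dOmega3, dOmegaBar3, map_add, map_smul, coeffFun_ι_mul_ι, smul_eq_mul,
        p00, p01, p02, p03, p10, p11, p12, p13, p20, p21, p22, p23, p30, p31, p32, p33] at h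
      linear_combination h
    have hρ : ρ = 0 := by
      rcases hab with ha | hb
      · exact (mul_eq_zero.mp E01).resolve_left ha
      · have : (starRingEnd ℂ) ρ = 0 := (mul_eq_zero.mp E23).resolve_left hb
        simpa using congrArg (starRingEnd ℂ) this
    by_cases ha : a = 0
    · have hb : b ≠ 0 := hab.resolve_left (fun h => h ha)
      subst ha
      have hA : A = 0 := by
        have h1 : b * (starRingEnd ℂ) A = 0 := by linear_combination -E02
        have h2 : (starRingEnd ℂ) A = 0 := (mul_eq_zero.mp h1).resolve_left hb
        simpa using congrArg (starRingEnd ℂ) h2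
      have hB : B = 0 := by
        have h1 : b * (starRingEnd ℂ) B = 0 := by linear_combination -E12
        have h2 : (starRingEnd ℂ) B = 0 := (mul_eq_zero.mp h1).resolve_left hb
        simpa using congrArg (starRingEnd ℂ) h2
      have hC : C = 0 := by
        have h1 : b * (starRingEnd ℂ) C = 0 := by linear_combination -E03
        have h2 : (starRingEnd ℂ) C = 0 := (mul_eq_zero.mp h1).resolve_left hb
        simpa using congrArg (starRingEnd ℂ) h2
      have hD : D = 0 := by
        have h1 : b * (starRingEnd ℂ) D = 0 := by linear_combination -E13
        have h2 : (starRingEnd ℂ) D = 0 := (mul_eq_zero.mp h1).resolve_left hb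
        simpa using congrArg (starRingEnd ℂ) h2
      exact ⟨hρ, by simp [hA, hB, hC, hD]⟩
    · refine ⟨hρ, ?_, ?_, ?_, ?_⟩
      · have key : B * (starRingEnd ℂ) B = C * (starRingEnd ℂ) C := by
          apply mul_left_cancel₀ ha
          linear_combination (starRingEnd ℂ) B * E03 - (starRingEnd ℂ) C * E12
        have h2 : (Complex.normSq B : ℂ) = (Complex.normSq C : ℂ) := by
          rw [← Complex.mul_conj, ← Complex.mul_conj]; exact key
        exact_mod_cast h2
      · apply mul_left_cancel₀ ha
        linear_combination (starRingEnd ℂ) D * E02 - (starRingEnd ℂ) A * E13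
      · apply mul_left_cancel₀ ha
        linear_combination (starRingEnd ℂ) B * E02 - (starRingEnd ℂ) A * E12
      · apply mul_left_cancel₀ ha
        linear_combination (starRingEnd ℂ) B * E13 - (starRingEnd ℂ) D * E12
  · rintro ⟨hρ, hBC, hAD, hAB, hDB⟩
    have hBC' : B * (starRingEnd ℂ) B = C * (starRingEnd ℂ) C := by
      rw [Complex.mul_conj, Complex.mul_conj]; exact_mod_cast hBC
    have conj_ne : ∀ z : ℂ, z ≠ 0 → (starRingEnd ℂ) z ≠ 0 := by
      intro z hz h
      exact hz (by simpa using congrArg (starRingEnd ℂ) h)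
    have hAB' : (starRingEnd ℂ) A * B = A * (starRingEnd ℂ) C := by
      have := congrArg (starRingEnd ℂ) hAB
      simp only [map_mul, Complex.conj_conj] at this
      linear_combination this
    have hDB' : (starRingEnd ℂ) D * B = D * (starRingEnd ℂ) C := by
      have := congrArg (starRingEnd ℂ) hDB
      simp only [map_mul, Complex.conj_conj] at this
      linear_combination this
    by_cases hA : A = 0
    · by_cases hB : B = 0
      · by_cases hC : C = 0
        · by_cases hD : D = 0
          · exact ⟨1, 0, Or.inl one_ne_zero,
              combo_eq_zero _ _ _ _ _ _ _ _ _ _ _ (by rw [hρ, mul_zero]) (by ring)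
                (by rw [hA]; simp) (by rw [hB, hC]; simp) (by rw [hB, hC]; simp)
                (by rw [hD]; simp)⟩
          · exact ⟨(starRingEnd ℂ) D, D, Or.inl (conj_ne D hD),
              combo_eq_zero _ _ _ _ _ _ _ _ _ _ _
                (by rw [hρ, mul_zero]) (by rw [hρ]; simp)
                (by linear_combination hAD) (by linear_combination hDB')
                (by linear_combination -hDB) (by ring)⟩
        · exact ⟨(starRingEnd ℂ) C, B, Or.inl (conj_ne C hC),
            combo_eq_zero _ _ _ _ _ _ _ _ _ _ _
              (by rw [hρ, mul_zero]) (by rw [hρ]; simp)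
              (by linear_combination -hAB') (by ring)
              (by linear_combination -hBC') (by linear_combination -hDB')⟩
      · exact ⟨(starRingEnd ℂ) B, C, Or.inl (conj_ne B hB),
          combo_eq_zero _ _ _ _ _ _ _ _ _ _ _
            (by rw [hρ, mul_zero]) (by rw [hρ]; simp)
            (by linear_combination hAB) (by linear_combination hBC')
            (by ring) (by linear_combination hDB)⟩
    · exact ⟨(starRingEnd ℂ) A, A, Or.inl (conj_ne A hA),
        combo_eq_zero _ _ _ _ _ _ _ _ _ _ _
          (by rw [hρ, mul_zero]) (by rw [hρ]; simp)
          (by ring) (by linear_combination hAB')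
          (by linear_combination -hAB) (by linear_combination -hAD)⟩
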